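/- arXiv:1711.06300 — 6 statements merged into one kernel-verified Lean document; each statement's English description precedes it below -/
import Mathlib

section
/- Let M(λ) = λM_1 + M_0 be a (q+1)m × (p+1)n pencil over a field F, viewed as a (q+1)×(p+1) block matrix with m×n blocks, and set k = p+q+1. Then (Λ_q(λ)^T ⊗ I_m) M(λ) (Λ_p(λ) ⊗ I_n) = P(λ) for a given matrix polynomial P(λ) = Σ_{i=0}^k A_i λ^i ∈ F[λ]^{m×n} if and only if for every s ∈ {0,...,k} the antidiagonal sum AS(M,s) := Σ_{i+j=k+2-s} [M_1]_{ij} + Σ_{i+j=k+1-s} [M_0]_{ij} equals A_s. -/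
open Polynomial Matrix

/-- for a pencil `M(λ) = λ M₁ + M₀` of size `(q+1)m × (p+1)n`,
viewed as a block matrix with `m × n` blocks, and `k = p+q+1`, one has
`(Λ_q(λ) ⊗ I_m) M(λ) (Λ_p(λ)^T ⊗ I_n) = P(λ)` if and only if `M(λ)` satisfies
the antidiagonal sum condition `AS(M,s) = A_s` for all `s ∈ {0,...,k}`.
(In 0-based block indices, the condition `i+j = k+2-s` for `M₁` reads
`i+j+s = k` and `i+j = k+1-s` for `M₀` reads `i+j+s+1 = k`.) -/
theorem stmt4 (F : Type*) [Field F] (m n p q : ℕ)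
    (M1 M0 : Matrix (Fin (q + 1) × Fin m) (Fin (p + 1) × Fin n) F)
    (A : ℕ → Matrix (Fin m) (Fin n) F) :
    ((Matrix.of fun (r : Fin m) (jc : Fin (q + 1) × Fin m) =>
        if r = jc.2 then (X : Polynomial F) ^ (q - (jc.1 : ℕ)) else 0) *
      (Matrix.of fun (ir : Fin (q + 1) × Fin m) (jc : Fin (p + 1) × Fin n) =>
        X * C (M1 ir jc) + C (M0 ir jc)) *
      (Matrix.of fun (jc : Fin (p + 1) × Fin n) (c : Fin n) =>
        if jc.2 = c then (X : Polynomial F) ^ (p - (jc.1 : ℕ)) else 0) =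
      Matrix.of fun (r : Fin m) (c : Fin n) =>
        ∑ i ∈ Finset.range (p + q + 2), C (A i r c) * X ^ i)
    ↔ (∀ s : ℕ, s ≤ p + q + 1 →
        (∑ i : Fin (q + 1), ∑ j : Fin (p + 1),
          (if (i : ℕ) + (j : ℕ) + s = p + q + 1 then
            Matrix.of (fun (a : Fin m) (b : Fin n) => M1 (i, a) (j, b)) else 0)) +
        (∑ i : Fin (q + 1), ∑ j : Fin (p + 1),
          (if (i : ℕ) + (j : ℕ) + s + 1 = p + q + 1 then
            Matrix.of (fun (a : Fin m) (b : Fin n) => M0 (i, a) (j, b)) else 0)) =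
        A s) := by
  have key : ∀ (r : Fin m) (c : Fin n),
      ((((Matrix.of fun (r : Fin m) (jc : Fin (q + 1) × Fin m) =>
          if r = jc.2 then (X : Polynomial F) ^ (q - (jc.1 : ℕ)) else 0) *
        (Matrix.of fun (ir : Fin (q + 1) × Fin m) (jc : Fin (p + 1) × Fin n) =>
          X * C (M1 ir jc) + C (M0 ir jc)) *
        (Matrix.of fun (jc : Fin (p + 1) × Fin n) (c : Fin n) =>
          if jc.2 = c then (X : Polynomial F) ^ (p - (jc.1 : ℕ)) else 0)) :
            Matrix (Fin m) (Fin n) (Polynomial F)) r c)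
      = ∑ i : Fin (q + 1), ∑ j : Fin (p + 1),
          (C (M1 (i, r) (j, c)) * X ^ (q - (i : ℕ) + (p - (j : ℕ)) + 1)
           + C (M0 (i, r) (j, c)) * X ^ (q - (i : ℕ) + (p - (j : ℕ)))) := by
    intro r c
    simp only [Matrix.mul_apply, Matrix.of_apply, Fintype.sum_prod_type,
      ite_mul, zero_mul, mul_ite, mul_zero, Finset.sum_ite_eq, Finset.sum_ite_eq',
      Finset.mem_univ, if_true, Finset.sum_mul]
    rw [Finset.sum_comm]
    refine Finset.sum_congr rfl fun i _ => Finset.sum_congr rfl fun j _ => ?_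
    ring
  have coeffL : ∀ (r : Fin m) (c : Fin n) (s : ℕ),
      (((((Matrix.of fun (r : Fin m) (jc : Fin (q + 1) × Fin m) =>
          if r = jc.2 then (X : Polynomial F) ^ (q - (jc.1 : ℕ)) else 0) *
        (Matrix.of fun (ir : Fin (q + 1) × Fin m) (jc : Fin (p + 1) × Fin n) =>
          X * C (M1 ir jc) + C (M0 ir jc)) *
        (Matrix.of fun (jc : Fin (p + 1) × Fin n) (c : Fin n) =>
          if jc.2 = c then (X : Polynomial F) ^ (p - (jc.1 : ℕ)) else 0)) :
            Matrix (Fin m) (Fin n) (Polynomial F)) r c).coeff s)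
      = (∑ i : Fin (q + 1), ∑ j : Fin (p + 1),
          if (i : ℕ) + (j : ℕ) + s = p + q + 1 then M1 (i, r) (j, c) else 0)
        + (∑ i : Fin (q + 1), ∑ j : Fin (p + 1),
          if (i : ℕ) + (j : ℕ) + s + 1 = p + q + 1 then M0 (i, r) (j, c) else 0) := by
    intro r c s
    rw [key]
    simp only [Polynomial.finset_sum_coeff, ← Finset.sum_add_distrib]
    refine Finset.sum_congr rfl fun i _ => Finset.sum_congr rfl fun j _ => ?_
    have hi : (i : ℕ) ≤ q := by omega
    have hj : (j : ℕ) ≤ p := by omega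
    simp only [coeff_add, coeff_C_mul, coeff_X_pow, mul_ite, mul_one, mul_zero]
    have h1 : (s = q - (i : ℕ) + (p - (j : ℕ)) + 1) ↔ ((i : ℕ) + (j : ℕ) + s = p + q + 1) := by
      omega
    have h2 : (s = q - (i : ℕ) + (p - (j : ℕ))) ↔ ((i : ℕ) + (j : ℕ) + s + 1 = p + q + 1) := by
      omega
    rw [if_congr h1 rfl rfl, if_congr h2 rfl rfl]
  have coeffR : ∀ (r : Fin m) (c : Fin n) (s : ℕ),
      (((Matrix.of fun (r : Fin m) (c : Fin n) =>
          ∑ i ∈ Finset.range (p + q + 2), C (A i r c) * X ^ i) :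
            Matrix (Fin m) (Fin n) (Polynomial F)) r c).coeff s
        = if s ≤ p + q + 1 then A s r c else 0 := by
    intro r c s
    simp only [Matrix.of_apply, Polynomial.finset_sum_coeff, coeff_C_mul, coeff_X_pow,
      mul_ite, mul_one, mul_zero]
    rw [Finset.sum_ite_eq]
    simp only [Finset.mem_range]
    exact if_congr (by omega) rfl rfl
  constructor
  · intro h s hs
    ext r c
    have h' := congrArg
      (fun Mx : Matrix (Fin m) (Fin n) (Polynomial F) => (Mx r c).coeff s) h
    rw [coeffL r c s, coeffR r c s, if_pos hs] at h'
    simpa [Matrix.add_apply, Matrix.sum_apply,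
      apply_ite (fun M : Matrix (Fin m) (Fin n) F => M r c)] using h'
  · intro h
    ext r c s
    rw [coeffL r c s, coeffR r c s]
    by_cases hs : s ≤ p + q + 1
    · rw [if_pos hs]
      have h' := congrArg (fun M : Matrix (Fin m) (Fin n) F => M r c) (h s hs)
      simpa [Matrix.add_apply, Matrix.sum_apply,
        apply_ite (fun M : Matrix (Fin m) (Fin n) F => M r c)] using h'
    · rw [if_neg hs]
      have z1 : (∑ i : Fin (q + 1), ∑ j : Fin (p + 1),
          if (i : ℕ) + (j : ℕ) + s = p + q + 1 then M1 (i, r) (j, c) else 0) = 0 :=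
        Finset.sum_eq_zero fun i _ => Finset.sum_eq_zero fun j _ => if_neg (by omega)
      have z2 : (∑ i : Fin (q + 1), ∑ j : Fin (p + 1),
          if (i : ℕ) + (j : ℕ) + s + 1 = p + q + 1 then M0 (i, r) (j, c) else 0) = 0 :=
        Finset.sum_eq_zero fun i _ => Finset.sum_eq_zero fun j _ => if_neg (by omega)
      rw [z1, z2, add_zero]
end

section
/- Let Q(λ) = Σ_{i=0}^d Q_i λ^i be an n×n matrix polynomial of odd degree d over a field F, and let M(λ;Q) be the block diagonal pencil diag(λQ_d + Q_{d-1}, λQ_{d-2} + Q_{d-3}, ..., λQ_1 + Q_0) of size n(d+1)/2. Then M(λ;Q), viewed as a ((d+1)/2)×((d+1)/2) block matrix with n×n blocks, satisfies the antidiagonal sum condition for Q(λ): for every s ∈ {0,...,d}, Σ_{i+j=d+2-s}[M_1]_{ij} + Σ_{i+j=d+1-s}[M_0]_{ij} = Q_s, where M(λ;Q) = λM_1 + M_0. Here d plays the role of k = p+q+1 with p = q = (d-1)/2. -/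
open Polynomial Matrix

/-- for an `n×n` matrix polynomial `Q(λ) = Σ_{i=0}^d Q_i λ^i` of
odd degree `d`, the block diagonal pencil `M(λ;Q) = diag(λQ_d + Q_{d-1}, ...,
λQ_1 + Q_0)`, viewed as a `((d+1)/2) × ((d+1)/2)` block matrix with `n×n`
blocks `M₁`, `M₀` (so that `M(λ;Q) = λM₁ + M₀`, the `i`-th 0-based diagonal
block of `M₁` being `Q_{d-2i}` and that of `M₀` being `Q_{d-1-2i}`), satisfies
the antidiagonal sum condition for `Q(λ)` with `k = d`, `p = q = (d-1)/2`. -/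
theorem stmt5 (F : Type*) [Field F] (n d : ℕ) (hd : Odd d)
    (Q : ℕ → Matrix (Fin n) (Fin n) F) :
    ∀ s : ℕ, s ≤ d →
      (∑ i : Fin ((d + 1) / 2), ∑ j : Fin ((d + 1) / 2),
        (if (i : ℕ) + (j : ℕ) + s = d then
          (if i = j then Q (d - 2 * (i : ℕ)) else 0) else 0)) +
      (∑ i : Fin ((d + 1) / 2), ∑ j : Fin ((d + 1) / 2),
        (if (i : ℕ) + (j : ℕ) + s + 1 = d then
          (if i = j then Q (d - 1 - 2 * (i : ℕ)) else 0) else 0)) = Q s := by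
  intro s hs
  obtain ⟨t, ht⟩ := hd
  have h1 : (∑ i : Fin ((d + 1) / 2), ∑ j : Fin ((d + 1) / 2),
      (if (i : ℕ) + (j : ℕ) + s = d then
        (if i = j then Q (d - 2 * (i : ℕ)) else 0) else 0))
      = ∑ i : Fin ((d + 1) / 2),
        (if (i : ℕ) + (i : ℕ) + s = d then Q (d - 2 * (i : ℕ)) else 0) := by
    refine Finset.sum_congr rfl fun i _ => ?_
    rw [Finset.sum_eq_single i]
    · simp
    · intro j _ hj
      simp [if_neg (Ne.symm hj)]
    · simp
  have h2 : (∑ i : Fin ((d + 1) / 2), ∑ j : Fin ((d + 1) / 2),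
      (if (i : ℕ) + (j : ℕ) + s + 1 = d then
        (if i = j then Q (d - 1 - 2 * (i : ℕ)) else 0) else 0))
      = ∑ i : Fin ((d + 1) / 2),
        (if (i : ℕ) + (i : ℕ) + s + 1 = d then Q (d - 1 - 2 * (i : ℕ)) else 0) := by
    refine Finset.sum_congr rfl fun i _ => ?_
    rw [Finset.sum_eq_single i]
    · simp
    · intro j _ hj
      simp [if_neg (Ne.symm hj)]
    · simp
  rw [h1, h2]
  rcases Nat.even_or_odd (d - s) with ⟨m, hm⟩ | ⟨m, hm⟩
  · have hmlt : m < (d + 1) / 2 := by omega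
    have e1 : (∑ i : Fin ((d + 1) / 2),
        (if (i : ℕ) + (i : ℕ) + s = d then Q (d - 2 * (i : ℕ)) else 0)) = Q s := by
      rw [Finset.sum_eq_single (⟨m, hmlt⟩ : Fin ((d + 1) / 2))]
      · have : m + m + s = d := by omega
        rw [if_pos this]
        exact congrArg Q (show d - 2 * m = s by omega)
      · intro j _ hj
        rw [if_neg]
        intro h
        refine hj (Fin.ext (show (j : ℕ) = m from ?_))
        omega
      · simp
    have e2 : (∑ i : Fin ((d + 1) / 2),
        (if (i : ℕ) + (i : ℕ) + s + 1 = d then Q (d - 1 - 2 * (i : ℕ)) else 0)) = 0 := by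
      refine Finset.sum_eq_zero fun i _ => ?_
      rw [if_neg]
      omega
    rw [e1, e2, add_zero]
  · have hmlt : m < (d + 1) / 2 := by omega
    have e1 : (∑ i : Fin ((d + 1) / 2),
        (if (i : ℕ) + (i : ℕ) + s = d then Q (d - 2 * (i : ℕ)) else 0)) = 0 := by
      refine Finset.sum_eq_zero fun i _ => ?_
      rw [if_neg]
      omega
    have e2 : (∑ i : Fin ((d + 1) / 2),
        (if (i : ℕ) + (i : ℕ) + s + 1 = d then Q (d - 1 - 2 * (i : ℕ)) else 0)) = Q s := by
      rw [Finset.sum_eq_single (⟨m, hmlt⟩ : Fin ((d + 1) / 2))]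
      · have : m + m + s + 1 = d := by omega
        rw [if_pos this]
        exact congrArg Q (show d - 1 - 2 * m = s by omega)
      · intro j _ hj
        rw [if_neg]
        intro h
        refine hj (Fin.ext (show (j : ℕ) = m from ?_))
        omega
      · simp
    rw [e1, e2, zero_add]
end

section
/- Let h be a nonnegative integer, let w_h be the admissible tuple associated with h, i.e., w_h = (h-1:h, h-3:h-2, ..., p+1:p+2, 0:p) where p = 0 if h is even and p = 1 if h is odd, and let c_h be its symmetric complement: c_h = (h-1, h-3, ..., 2, 0) if h is odd, c_h = (h-1, h-3, ..., 1) if h > 0 is even, and c_h = ∅ if h = 0. Then the concatenated index tuple (w_h, c_h) satisfies the Successor Infix Property: for every pair of equal indices i_a = i_b with a < b in the tuple, there exists c with a < c < b such that i_c = i_a + 1. -/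
/-- The Successor Infix Property: for every pair of equal entries at positions
`a < b` of the tuple, some entry equal to their value plus one occurs strictly
between them. -/
def SIP (l : List ℕ) : Prop :=
  ∀ (a b : ℕ) (ha : a < l.length) (hb : b < l.length), a < b →
    l.get ⟨a, ha⟩ = l.get ⟨b, hb⟩ →
    ∃ (c : ℕ) (hc : c < l.length), a < c ∧ c < b ∧
      l.get ⟨c, hc⟩ = l.get ⟨a, ha⟩ + 1

/-- The admissible tuple `w_h = (h-1:h, h-3:h-2, ..., p+1:p+2, 0:p)` with
`p = 0` for even `h` and `p = 1` for odd `h`. -/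
def wTuple : ℕ → List ℕ
  | 0 => [0]
  | 1 => [0, 1]
  | (h + 2) => [h + 1, h + 2] ++ wTuple h

/-- The symmetric complement `c_h` of `w_h`: `(h-1, h-3, ..., 2, 0)` for odd
`h`, `(h-1, h-3, ..., 1)` for even `h > 0`, and `∅` for `h = 0`. -/
def cTuple : ℕ → List ℕ
  | 0 => []
  | 1 => [0]
  | (h + 2) => (h + 1) :: cTuple h

lemma wTuple_perm : ∀ h, List.Perm (wTuple h) (List.range (h+1))
  | 0 => by simp [wTuple, List.range_succ]
  | 1 => by simp [wTuple, List.range_succ]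
  | (h+2) => by
    have ih := wTuple_perm h
    have h1 : List.Perm ([h+1, h+2] ++ wTuple h) ([h+1, h+2] ++ List.range (h+1)) :=
      (List.Perm.refl _).append ih
    have h2 : List.Perm ([h+1, h+2] ++ List.range (h+1)) (List.range (h+1) ++ [h+1, h+2]) :=
      List.perm_append_comm
    have h3 : List.range (h+1) ++ [h+1, h+2] = List.range (h+3) := by
      have e : List.range (h+3) = List.range (h+1) ++ [h+1] ++ [h+2] := by
        rw [show h+3 = (h+2)+1 from rfl, List.range_succ,
            show h+2 = (h+1)+1 from rfl, List.range_succ]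
      rw [e]; simp
    show List.Perm ([h+1, h+2] ++ wTuple h) _
    rw [← h3]
    exact h1.trans h2

lemma wTuple_nodup (h : ℕ) : (wTuple h).Nodup :=
  (wTuple_perm h).nodup_iff.mpr List.nodup_range

lemma cTuple_lt : ∀ h, ∀ x ∈ cTuple h, x < h
  | 0 => by simp [cTuple]
  | 1 => by simp [cTuple]
  | (h+2) => by
    intro x hx
    simp only [cTuple, List.mem_cons] at hx
    rcases hx with rfl | hx
    · omega
    · have := cTuple_lt h x hx; omega

lemma cTuple_nodup : ∀ h, (cTuple h).Nodup
  | 0 => by simp [cTuple]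
  | 1 => by simp [cTuple]
  | (h+2) => by
    refine List.nodup_cons.mpr ⟨fun hmem => ?_, cTuple_nodup h⟩
    have := cTuple_lt h _ hmem; omega

lemma infix_lemma : ∀ h, ∀ v ∈ cTuple h, [v, v+1] <:+: wTuple h
  | 0 => by simp [cTuple]
  | 1 => by
    intro v hv; simp [cTuple] at hv; subst hv
    exact List.infix_refl _
  | (h+2) => by
    intro v hv
    simp only [cTuple, List.mem_cons] at hv
    rcases hv with rfl | hv
    · exact ⟨[], wTuple h, by simp [wTuple]⟩
    · exact (infix_lemma h v hv).trans ((List.suffix_append _ _).isInfix)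

set_option maxHeartbeats 1000000 in
/-- the concatenated index tuple `(w_h, c_h)` satisfies the
Successor Infix Property. -/
theorem stmt12 (h : ℕ) : SIP (wTuple h ++ cTuple h) := by
  intro a b ha hb hab heq
  simp only [List.get_eq_getElem] at heq ⊢
  have hlen : (wTuple h ++ cTuple h).length = (wTuple h).length + (cTuple h).length := by
    simp
  by_cases hbw : b < (wTuple h).length
  · -- both in wTuple: contradicts nodup
    have haw : a < (wTuple h).length := lt_trans hab hbw
    rw [List.getElem_append_left haw, List.getElem_append_left hbw] at heq
    exact absurd ((wTuple_nodup h).getElem_inj_iff.mp heq) (by omega)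
  by_cases haw : (wTuple h).length ≤ a
  · -- both in cTuple: contradicts nodup
    have hbc : b - (wTuple h).length < (cTuple h).length := by
      rw [hlen] at hb; omega
    rw [List.getElem_append_right haw, List.getElem_append_right (by omega)] at heq
    have := (cTuple_nodup h).getElem_inj_iff.mp heq
    omega
  · -- a in wTuple, b in cTuple
    push_neg at haw
    have hbw' : (wTuple h).length ≤ b := by omega
    obtain ⟨v, hv⟩ : ∃ v, (wTuple h)[a]'haw = v := ⟨_, rfl⟩
    have heqw : (wTuple h ++ cTuple h)[a] = v := (List.getElem_append_left haw).trans hv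
    rw [List.getElem_append_right hbw'] at heq
    have hvb : (cTuple h)[b - (wTuple h).length]'(by rw [hlen] at hb; omega) = v :=
      heq.symm.trans heqw
    have hvc : v ∈ cTuple h := hvb ▸ List.getElem_mem _
    obtain ⟨s, t, hst⟩ := infix_lemma h v hvc
    -- positions of v and v+1 in wTuple h
    have hslen : s.length + 2 + t.length = (wTuple h).length := by
      rw [← hst]; simp; omega
    have hs0' : (s ++ [v, v + 1] ++ t)[s.length]'(by simp) = v := by
      rw [List.getElem_append_left (by simp : s.length < (s ++ [v, v + 1]).length) (h' := by simp),
          List.getElem_append_right (le_refl s.length)]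
      simp
    have hs0 : (wTuple h)[s.length]'(by omega) = v := by
      rw [← List.getElem_of_eq hst]; exact hs0'
    have hs1' : (s ++ [v, v + 1] ++ t)[s.length + 1]'(by simp) = v + 1 := by
      rw [List.getElem_append_left (by simp : s.length + 1 < (s ++ [v, v + 1]).length) (h' := by simp),
          List.getElem_append_right (by omega : s.length ≤ s.length + 1)]
      simp
    have hs1 : (wTuple h)[s.length + 1]'(by omega) = v + 1 := by
      rw [← List.getElem_of_eq hst]; exact hs1'
    have heq2 : (wTuple h)[s.length]'(by omega) = (wTuple h)[a]'haw := by
      rw [hs0, hv]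
    have hsa : s.length = a := (wTuple_nodup h).getElem_inj_iff.mp heq2
    subst hsa
    refine ⟨s.length + 1, by rw [hlen]; omega, by omega, by omega, ?_⟩
    exact (List.getElem_append_left (by omega : s.length + 1 < (wTuple h).length)).trans
      (hs1.trans (congrArg (· + 1) heqw.symm))
end

section
/- Let t = (a_s:b_s, a_{s-1}:b_{s-1}, ..., a_1:b_1) be an index tuple in column standard form with indices from {0,...,h}, i.e., h ≥ b_s > b_{s-1} > ... > b_1 ≥ 0 and 0 ≤ a_j ≤ b_j for all j. Then t satisfies the Successor Infix Property. -/
/-- The list of the tuple `(a_{s-1}:b_{s-1}, ..., a_1:b_1, a_0:b_0)` (0-based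
indexing of the strings, listed with head indices decreasing left to right),
where `(a:b)` denotes the string `(a, a+1, ..., b)`. -/
def csfList (s : ℕ) (a b : ℕ → ℕ) : List ℕ :=
  ((List.range s).reverse).flatMap fun j => List.range' (a j) (b j + 1 - a j)

lemma sip_prepend (u n : ℕ) (L : List ℕ) (hL : SIP L)
    (hlt : ∀ x ∈ L, x + 1 < u + n) :
    SIP (List.range' u n ++ L) := by
  intro p q hp hq hpq heq
  simp only [List.get_eq_getElem] at *
  have hrn : (List.range' u n).length = n := List.length_range' ..
  have hlen : (List.range' u n ++ L).length = n + L.length := by simp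
  by_cases hpn : p < n
  · by_cases hqn : q < n
    · exfalso
      have h1 : (List.range' u n ++ L)[p] = u + p := by
        rw [List.getElem_append_left (by omega), List.getElem_range']; ring
      have h2 : (List.range' u n ++ L)[q] = u + q := by
        rw [List.getElem_append_left (by omega), List.getElem_range']; ring
      rw [h1, h2] at heq
      omega
    · -- p in run, q in L
      have hqL : q - n < L.length := by rw [hlen] at hq; omega
      have hx : (List.range' u n ++ L)[p] = u + p := by
        rw [List.getElem_append_left (by omega), List.getElem_range']; ring
      have hy : (List.range' u n ++ L)[q] = L[q - n] := by
        rw [List.getElem_append_right (by omega)]; simp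
      have hmem : L[q - n] ∈ L := List.getElem_mem hqL
      have hlt' := hlt _ hmem
      rw [hx, hy] at heq
      have hp1 : p + 1 < n := by omega
      refine ⟨p + 1, by rw [hlen]; omega, by omega, by omega, ?_⟩
      rw [List.getElem_append_left (by omega), List.getElem_range', hx]
      ring
  · have hqn : ¬ q < n := by omega
    have hpL : p - n < L.length := by rw [hlen] at hp; omega
    have hqL : q - n < L.length := by rw [hlen] at hq; omega
    have hx : (List.range' u n ++ L)[p] = L[p - n] := by
      rw [List.getElem_append_right (by omega)]; simp
    have hy : (List.range' u n ++ L)[q] = L[q - n] := by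
      rw [List.getElem_append_right (by omega)]; simp
    rw [hx, hy] at heq
    obtain ⟨c, hc, h1, h2, h3⟩ := hL (p - n) (q - n) hpL hqL (by omega) (by
      simpa using heq)
    refine ⟨c + n, by rw [hlen]; omega, by omega, by omega, ?_⟩
    have hz : (List.range' u n ++ L)[c + n]'(by rw [hlen]; omega) = L[c] := by
      rw [List.getElem_append_right (by omega)]
      simp
    rw [hz, hx]
    simpa using h3

lemma csfList_succ (s : ℕ) (a b : ℕ → ℕ) :
    csfList (s + 1) a b =
      List.range' (a s) (b s + 1 - a s) ++ csfList s a b := by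
  simp [csfList, List.range_succ]

lemma mem_csfList_le (s : ℕ) (a b : ℕ → ℕ) (x : ℕ) (hx : x ∈ csfList s a b) :
    ∃ j < s, x ≤ b j := by
  simp only [csfList, List.mem_flatMap, List.mem_reverse, List.mem_range,
    List.mem_range'] at hx
  obtain ⟨j, hj, _, hx2⟩ := hx
  exact ⟨j, hj, by omega⟩

/-- an index tuple in column standard form with indices from
`{0,...,h}` — i.e. `h ≥ b_{s-1} > ... > b_1 > b_0 ≥ 0` and `a_j ≤ b_j` —
satisfies the Successor Infix Property. -/
theorem stmt15 (h s : ℕ) (a b : ℕ → ℕ)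
    (hmono : ∀ i j : ℕ, i < j → j < s → b i < b j)
    (hab : ∀ j < s, a j ≤ b j)
    (hh : ∀ j < s, b j ≤ h) :
    SIP (csfList s a b) := by
  clear hh
  induction s with
  | zero =>
      intro p q hp hq
      simp [csfList] at hp
  | succ s ih =>
      rw [csfList_succ]
      have habs : a s ≤ b s := hab s (by omega)
      apply sip_prepend
      · exact ih (fun i j hij hjs => hmono i j hij (by omega))
          (fun j hj => hab j (by omega))
      · intro x hx
        obtain ⟨j, hj, hxb⟩ := mem_csfList_le s a b x hx
        have := hmono j s hj (by omega)
        omega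
end

section
/- Let P(λ) = Σ_{i=0}^k A_i λ^i be an n×n matrix polynomial of odd degree k, s = (k-1)/2, and consider the pencil O_1^P(λ) = [[M(λ;P), K_s(λ)^T],[K_s(λ), 0]] of size kn×kn, where M(λ;P) = diag(λA_k + A_{k-1}, λA_{k-2} + A_{k-3}, ..., λA_1 + A_0) and K_s(λ) = L_s(λ) ⊗ I_n. Then O_1^P(λ) is block-symmetric, and (Λ_s(λ) ⊗ I_n) M(λ;P) (Λ_s(λ)^T ⊗ I_n) = P(λ). -/
open Polynomial Matrix

/-- Block transpose of an `a×b` block matrix with `n×n` blocks. -/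
def blockT {F : Type*} {a b n : ℕ} (M : Matrix (Fin a × Fin n) (Fin b × Fin n) F) :
    Matrix (Fin b × Fin n) (Fin a × Fin n) F :=
  Matrix.of fun p q => M (q.1, p.2) (p.1, q.2)

lemma aux1 (F : Type*) [CommRing F] (a : ℕ → F) (s : ℕ) :
    ∑ m ∈ Finset.range (s+1), (X * C (a (2*m+1)) + C (a (2*m))) * X^(2*m)
      = ∑ i ∈ Finset.range (2*s+2), C (a i) * X^i := by
  induction s with
  | zero => simp [Finset.sum_range_succ]; ring
  | succ t ih =>
      rw [Finset.sum_range_succ, ih,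
        show 2*(t+1)+2 = (2*t+2)+1+1 from by ring,
        Finset.sum_range_succ _ ((2*t+2)+1), Finset.sum_range_succ _ (2*t+2),
        show 2*(t+1)+1 = 2*t+2+1 from by ring, show 2*(t+1) = 2*t+2 from by ring]
      ring

/-- for `P(λ) = Σ_{i=0}^k A_i λ^i` of odd degree `k = 2s+1`, the
pencil `O₁^P(λ) = [[M(λ;P), K_s(λ)^T],[K_s(λ), 0]]` (with
`M(λ;P) = diag(λA_k + A_{k-1}, ..., λA_1 + A_0)` and `K_s(λ) = L_s(λ) ⊗ I_n`)
is block-symmetric, and `(Λ_s(λ) ⊗ I_n) M(λ;P) (Λ_s(λ)^T ⊗ I_n) = P(λ)`. -/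
theorem stmt18 (F : Type*) [Field F] (n k s : ℕ) (hk : k = 2 * s + 1)
    (A : ℕ → Matrix (Fin n) (Fin n) F)
    (O1 : Matrix (Fin k × Fin n) (Fin k × Fin n) (Polynomial F))
    (hO1 : O1 = Matrix.of fun p q =>
      if (p.1 : ℕ) ≤ s ∧ (q.1 : ℕ) ≤ s then
        (if (p.1 : ℕ) = (q.1 : ℕ) then
          X * C (A (k - 2 * (p.1 : ℕ)) p.2 q.2) +
            C (A (k - 1 - 2 * (p.1 : ℕ)) p.2 q.2)
        else 0)
      else if (p.1 : ℕ) ≤ s then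
        (if p.2 = q.2 then
          (if (p.1 : ℕ) = (q.1 : ℕ) - (s + 1) then -1
           else if (p.1 : ℕ) = (q.1 : ℕ) - s then X else 0)
         else 0)
      else if (q.1 : ℕ) ≤ s then
        (if p.2 = q.2 then
          (if (q.1 : ℕ) = (p.1 : ℕ) - (s + 1) then -1
           else if (q.1 : ℕ) = (p.1 : ℕ) - s then X else 0)
         else 0)
      else 0) :
    blockT O1 = O1 ∧
    (Matrix.of fun (r : Fin n) (jc : Fin (s + 1) × Fin n) =>
        if r = jc.2 then (X : Polynomial F) ^ (s - (jc.1 : ℕ)) else 0) *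
      (Matrix.of fun (p q : Fin (s + 1) × Fin n) =>
        if (p.1 : ℕ) = (q.1 : ℕ) then
          X * C (A (k - 2 * (p.1 : ℕ)) p.2 q.2) +
            C (A (k - 1 - 2 * (p.1 : ℕ)) p.2 q.2)
        else 0) *
      (Matrix.of fun (jc : Fin (s + 1) × Fin n) (c : Fin n) =>
        if jc.2 = c then (X : Polynomial F) ^ (s - (jc.1 : ℕ)) else 0) =
      Matrix.of fun (r c : Fin n) =>
        ∑ i ∈ Finset.range (k + 1), C (A i r c) * X ^ i := by
  constructor
  · subst hO1
    refine Matrix.ext fun p q => ?_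
    obtain ⟨p1, p2⟩ := p
    obtain ⟨q1, q2⟩ := q
    simp only [blockT, Matrix.of_apply]
    by_cases h1 : (p1:ℕ) ≤ s <;> by_cases h2 : (q1:ℕ) ≤ s <;>
      simp only [h1, h2, and_true, true_and, and_false, false_and, if_true, if_false]
    rcases eq_or_ne (p1:ℕ) (q1:ℕ) with h | h
    · rw [if_pos h, if_pos h.symm, h]
    · simp [h, h.symm]
  · refine Matrix.ext fun r c => ?_
    simp only [Matrix.mul_apply, Matrix.of_apply, Fintype.sum_prod_type,
      ite_mul, mul_ite, zero_mul, mul_zero, Finset.sum_ite_irrel, Finset.sum_const_zero,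
      Finset.sum_ite_eq, Finset.sum_ite_eq', Finset.mem_univ, if_true, Fin.val_inj]
    rw [Fin.sum_univ_eq_sum_range (fun j => (X:Polynomial F) ^ (s - j) *
          (X * C (A (k - 2*j) r c) + C (A (k-1-2*j) r c)) * X ^ (s - j)) (s+1),
        ← Finset.sum_range_reflect, hk, show 2*s+1+1 = 2*s+2 from rfl,
        ← aux1 F (fun i => A i r c) s]
    refine Finset.sum_congr rfl fun m hm => ?_
    simp only [Finset.mem_range] at hm
    rw [show s+1-1-m = s-m from by omega, show s - (s-m) = m from by omega,
        show 2*s+1 - 2*(s-m) = 2*m+1 from by omega, show 2*s+1-1-2*(s-m) = 2*m from by omega]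
    ring
end

section
/- Let P(λ) = Σ_{i=0}^k A_i λ^i be an n×n matrix polynomial of odd degree k ≥ 3, let s = (k-1)/2, and let T_P(λ) be the block tridiagonal block-symmetric generalized Fiedler pencil of size kn×kn with diagonal blocks λA_{k-2j} + A_{k-1-2j} in block positions (2j+1, 2j+1) for j = 0,...,s, zero blocks in even diagonal positions, and off-diagonal pattern: block (2j+1, 2j+2) = block (2j+2, 2j+1) = -I_n and block (2j+2, 2j+3) = block (2j+3, 2j+2) = λI_n. Let c be the permutation (1, 3, 5, ..., k, 2, 4, ..., k-1) of {1,...,k} and Π_c^n the associated block-permutation matrix. Then (Π_c^n)^B T_P(λ) Π_c^n = O_1^P(λ), where O_1^P(λ) = [[M(λ;P), K_s(λ)^T],[K_s(λ), 0]] with M(λ;P) = diag(λA_k + A_{k-1}, ..., λA_1 + A_0) and K_s(λ) = L_s(λ) ⊗ I_n. -/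
open Polynomial Matrix

/-- for `P(λ) = Σ_{i=0}^k A_i λ^i` of odd degree `k = 2s+1 ≥ 3`,
the block tridiagonal block-symmetric generalized Fiedler pencil `T_P(λ)`
(diagonal blocks `λA_{k-2j} + A_{k-1-2j}` in odd 1-based block positions, zero
blocks in even positions, off-diagonal blocks `-I_n` in positions
`(2j+1, 2j+2)` and `λI_n` in positions `(2j+2, 2j+3)`, symmetrically) satisfies
`(Π_c^n)^B T_P(λ) Π_c^n = O₁^P(λ)` where `c = (1, 3, ..., k, 2, 4, ..., k-1)`
and `O₁^P(λ) = [[M(λ;P), K_s(λ)^T],[K_s(λ), 0]]`. -/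
theorem stmt19 (F : Type*) [Field F] (n k s : ℕ) (hs : 1 ≤ s) (hk : k = 2 * s + 1)
    (A : ℕ → Matrix (Fin n) (Fin n) F)
    (T : Matrix (Fin k × Fin n) (Fin k × Fin n) (Polynomial F))
    (hT : T = Matrix.of fun p q =>
      if (p.1 : ℕ) = (q.1 : ℕ) ∧ (p.1 : ℕ) % 2 = 0 then
        X * C (A (k - (p.1 : ℕ)) p.2 q.2) + C (A (k - 1 - (p.1 : ℕ)) p.2 q.2)
      else if ((q.1 : ℕ) = (p.1 : ℕ) + 1 ∧ (p.1 : ℕ) % 2 = 0) ∨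
              ((p.1 : ℕ) = (q.1 : ℕ) + 1 ∧ (q.1 : ℕ) % 2 = 0) then
        (if p.2 = q.2 then -1 else 0)
      else if ((q.1 : ℕ) = (p.1 : ℕ) + 1 ∧ (p.1 : ℕ) % 2 = 1) ∨
              ((p.1 : ℕ) = (q.1 : ℕ) + 1 ∧ (q.1 : ℕ) % 2 = 1) then
        (if p.2 = q.2 then X else 0)
      else 0)
    (Pc : Matrix (Fin k × Fin n) (Fin k × Fin n) (Polynomial F))
    (hPc : Pc = Matrix.of fun p q =>
      if (p.1 : ℕ) = (if (q.1 : ℕ) ≤ s then 2 * (q.1 : ℕ)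
                      else 2 * ((q.1 : ℕ) - s) - 1) ∧ p.2 = q.2 then 1 else 0)
    (O1 : Matrix (Fin k × Fin n) (Fin k × Fin n) (Polynomial F))
    (hO1 : O1 = Matrix.of fun p q =>
      if (p.1 : ℕ) ≤ s ∧ (q.1 : ℕ) ≤ s then
        (if (p.1 : ℕ) = (q.1 : ℕ) then
          X * C (A (k - 2 * (p.1 : ℕ)) p.2 q.2) +
            C (A (k - 1 - 2 * (p.1 : ℕ)) p.2 q.2)
        else 0)
      else if (p.1 : ℕ) ≤ s then
        (if p.2 = q.2 then
          (if (p.1 : ℕ) = (q.1 : ℕ) - (s + 1) then -1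
           else if (p.1 : ℕ) = (q.1 : ℕ) - s then X else 0)
         else 0)
      else if (q.1 : ℕ) ≤ s then
        (if p.2 = q.2 then
          (if (q.1 : ℕ) = (p.1 : ℕ) - (s + 1) then -1
           else if (q.1 : ℕ) = (p.1 : ℕ) - s then X else 0)
         else 0)
      else 0) :
    blockT Pc * T * Pc = O1 := by
  subst hk
  have hf : ∀ i : Fin (2*s+1),
      (if (i:ℕ) ≤ s then 2*(i:ℕ) else 2*((i:ℕ)-s)-1) < 2*s+1 := by
    intro i; have := i.isLt; split <;> omega
  set g : Fin (2*s+1) → Fin (2*s+1) :=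
    fun i => ⟨if (i:ℕ) ≤ s then 2*(i:ℕ) else 2*((i:ℕ)-s)-1, hf i⟩ with hg
  have hBT : ∀ p a : Fin (2*s+1) × Fin n,
      blockT Pc p a = if a = (g p.1, p.2) then 1 else 0 := by
    intro p a
    simp only [blockT, hPc, Matrix.of_apply]
    congr 1
    simp only [eq_iff_iff, Prod.ext_iff, Fin.ext_iff, hg] <;> tauto
  have hPv : ∀ b q : Fin (2*s+1) × Fin n,
      Pc b q = if b = (g q.1, q.2) then 1 else 0 := by
    intro b q
    simp only [hPc, Matrix.of_apply]
    congr 1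
    simp only [eq_iff_iff, Prod.ext_iff, Fin.ext_iff, hg] <;> tauto
  refine Matrix.ext fun p q => ?_
  have key : (blockT Pc * T * Pc) p q = T (g p.1, p.2) (g q.1, q.2) := by
    simp only [Matrix.mul_apply, hBT, hPv, ite_mul, mul_ite, one_mul, zero_mul,
      mul_one, mul_zero, Finset.sum_ite_eq', Finset.mem_univ, if_true]
  rw [key]
  obtain ⟨pb, pr⟩ := p
  obtain ⟨qb, qr⟩ := q
  have hpb := pb.isLt
  have hqb := qb.isLt
  simp only [hT, hO1, Matrix.of_apply, hg]
  by_cases hi : (pb:ℕ) ≤ s <;> by_cases hj : (qb:ℕ) ≤ s <;>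
    simp only [hi, hj, and_self, and_true, true_and, false_and, and_false,
      if_true, if_false, ite_true, ite_false] <;>
    split_ifs <;> first | rfl | omega |
      (rw [show (pb:ℕ) = (qb:ℕ) from by omega])
end
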